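/- Fix a nonempty uncertainty set 𝓕 of value distributions on a finite value set G such that OPT(F) > 0 for every F ∈ 𝓕. Then the set {λ ∈ [0,1] : R_λ*(𝓕) ≤ 0} is nonempty and has a largest element, and the maximin ratio equals this largest element: max_Φ min_{F∈𝓕} Ratio(Φ,F) = max{ λ ∈ [0,1] : R_λ*(𝓕) ≤ 0 }. -/
import Mathlib


noncomputable section

namespace RobustPricing

/-- A probability weight vector on the grid `{v 0, …, v K}`. -/
def IsDist {K : ℕ} (f : Fin (K + 1) → ℝ) : Prop :=
  (∀ i, 0 ≤ f i) ∧ ∑ i, f i = 1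

/-- Tail probability `F̄(p) = ∑_{v ∈ G, v ≥ p} f(v)`. -/
def tail {K : ℕ} (v f : Fin (K + 1) → ℝ) (p : ℝ) : ℝ :=
  ∑ i, if p ≤ v i then f i else 0

/-- Expected revenue of the price distribution `φ` against the value distribution `f`. -/
def revenue {K : ℕ} (v φ f : Fin (K + 1) → ℝ) : ℝ :=
  ∑ i, φ i * v i * tail v f (v i)

/-- `OPT(F) = max_{p ∈ G} p · F̄(p)`. -/
def opt {K : ℕ} (v f : Fin (K + 1) → ℝ) : ℝ :=
  ⨆ i, v i * tail v f (v i)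

/-- `Regret(Φ, F) = OPT(F) − Revenue(Φ, F)`. -/
def regret {K : ℕ} (v φ f : Fin (K + 1) → ℝ) : ℝ :=
  opt v f - revenue v φ f

/-- `Ratio(Φ, F) = Revenue(Φ, F) / OPT(F)`. -/
def ratio {K : ℕ} (v φ f : Fin (K + 1) → ℝ) : ℝ :=
  revenue v φ f / opt v f

/-- The set of mechanisms (price distributions on the grid). -/
def Mech (K : ℕ) : Set (Fin (K + 1) → ℝ) := {φ | IsDist φ}

/-- Worst-case `λ`-regret `R_λ^Φ(𝓕)` of mechanism `φ` over the uncertainty set `F`. -/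
def wcReg {K : ℕ} (v : Fin (K + 1) → ℝ) (F : Set (Fin (K + 1) → ℝ))
    (φ : Fin (K + 1) → ℝ) (l : ℝ) : ℝ :=
  sSup ((fun f => l * opt v f - revenue v φ f) '' F)

/-- Minimax `λ`-regret `R_λ*(𝓕)`. -/
def minimaxReg {K : ℕ} (v : Fin (K + 1) → ℝ) (F : Set (Fin (K + 1) → ℝ)) (l : ℝ) : ℝ :=
  sInf ((fun φ => wcReg v F φ l) '' Mech K)

/-- Worst-case revenue `min_{F ∈ 𝓕} Revenue(Φ, F)`. -/
def worstRevenue {K : ℕ} (v : Fin (K + 1) → ℝ) (F : Set (Fin (K + 1) → ℝ))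
    (φ : Fin (K + 1) → ℝ) : ℝ :=
  sInf ((fun f => revenue v φ f) '' F)

/-- Worst-case regret `max_{F ∈ 𝓕} Regret(Φ, F)`. -/
def worstRegret {K : ℕ} (v : Fin (K + 1) → ℝ) (F : Set (Fin (K + 1) → ℝ))
    (φ : Fin (K + 1) → ℝ) : ℝ :=
  sSup ((fun f => regret v φ f) '' F)

/-- Worst-case ratio `min_{F ∈ 𝓕} Ratio(Φ, F)`. -/
def worstRatio {K : ℕ} (v : Fin (K + 1) → ℝ) (F : Set (Fin (K + 1) → ℝ))
    (φ : Fin (K + 1) → ℝ) : ℝ :=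
  sInf ((fun f => ratio v φ f) '' F)

/-- Maximin revenue `θ*_Revenue(𝓕) = max_Φ min_{F ∈ 𝓕} Revenue(Φ, F)`. -/
def thetaRevStar {K : ℕ} (v : Fin (K + 1) → ℝ) (F : Set (Fin (K + 1) → ℝ)) : ℝ :=
  sSup ((fun φ => worstRevenue v F φ) '' Mech K)

/-- Minimax regret `θ*_Regret(𝓕) = min_Φ max_{F ∈ 𝓕} Regret(Φ, F)`. -/
def thetaRegStar {K : ℕ} (v : Fin (K + 1) → ℝ) (F : Set (Fin (K + 1) → ℝ)) : ℝ :=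
  sInf ((fun φ => worstRegret v F φ) '' Mech K)

/-- Maximin ratio `θ*_Ratio(𝓕) = max_Φ min_{F ∈ 𝓕} Ratio(Φ, F)`. -/
def thetaRatStar {K : ℕ} (v : Fin (K + 1) → ℝ) (F : Set (Fin (K + 1) → ℝ)) : ℝ :=
  sSup ((fun φ => worstRatio v F φ) '' Mech K)

/-- Relative performance of `Φ` over all three criteria:
`RelPerf(Φ, All, 𝓕) = min_{F ∈ 𝓕} min{Rev/θ*_Rev, θ*_Reg/Reg, Ratio/θ*_Ratio}`. -/
def relPerfAll {K : ℕ} (v : Fin (K + 1) → ℝ) (F : Set (Fin (K + 1) → ℝ))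
    (φ : Fin (K + 1) → ℝ) : ℝ :=
  sInf ((fun f => min (revenue v φ f / thetaRevStar v F)
    (min (thetaRegStar v F / regret v φ f) (ratio v φ f / thetaRatStar v F))) '' F)

/-- Multi-criterion robust approximation factor `c*(𝓕) = max_Φ RelPerf(Φ, All, 𝓕)`. -/
def cstar {K : ℕ} (v : Fin (K + 1) → ℝ) (F : Set (Fin (K + 1) → ℝ)) : ℝ :=
  sSup ((fun φ => relPerfAll v F φ) '' Mech K)

/-- The moment–quantile uncertainty set: distributions on the grid whose `i`-th moments
are `m i` for `i ∈ I` and whose tail probability at `r j` is `q j` for `j ∈ J`. -/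
def MQSet {K : ℕ} (v : Fin (K + 1) → ℝ) (I : Finset ℕ) (m : ℕ → ℝ)
    (J : Finset ℕ) (r q : ℕ → ℝ) : Set (Fin (K + 1) → ℝ) :=
  {f | IsDist f ∧ (∀ i ∈ I, ∑ k, f k * v k ^ i = m i) ∧ (∀ j ∈ J, tail v f (r j) = q j)}

/-- Cumulative term `∑_{s ∈ G, s ≤ v_w} s · φ(s)`. -/
def cum {K : ℕ} (v φ : Fin (K + 1) → ℝ) (w : Fin (K + 1)) : ℝ :=
  ∑ s, if v s ≤ v w then v s * φ s else 0

/-- Feasibility of dual variables `(θ, α, β)` in the dual LP for the worst-case λ-regret: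
(a) `θ ≥ ∑_i α_i(p) m_i + ∑_j β_j(p) q_j` for all prices `p ∈ G`, and
(b) `λ p 1{v ≥ p} − ∑_{s ≤ v} s φ(s) − ∑_i α_i(p) v^i − ∑_j β_j(p) 1{v ≥ r_j} ≤ 0`
for all values `v` and prices `p` in `G`. -/
def dualFeas {K : ℕ} (v : Fin (K + 1) → ℝ) (I : Finset ℕ) (m : ℕ → ℝ)
    (J : Finset ℕ) (r q : ℕ → ℝ) (φ : Fin (K + 1) → ℝ) (l θ : ℝ)
    (α β : ℕ → Fin (K + 1) → ℝ) : Prop :=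
  (∀ p, ∑ i ∈ I, α i p * m i + ∑ j ∈ J, β j p * q j ≤ θ) ∧
  (∀ w p, l * v p * (if v p ≤ v w then 1 else 0) - cum v φ w
      - (∑ i ∈ I, α i p * v w ^ i)
      - (∑ j ∈ J, β j p * (if r j ≤ v w then 1 else 0)) ≤ 0)

/-- the set `{λ ∈ [0,1] : R_λ*(𝓕) ≤ 0}` is nonempty with a largest element,
and the maximin ratio equals this largest element. -/
theorem stmt1 (K : ℕ) (v : Fin (K + 1) → ℝ) (hv : StrictMono v) (hv0 : ∀ i, 0 ≤ v i)
    (F : Set (Fin (K + 1) → ℝ)) (hne : F.Nonempty) (hsub : ∀ f ∈ F, IsDist f)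
    (hcl : IsClosed F) (hopt : ∀ f ∈ F, 0 < opt v f) :
    ∃ lm : ℝ, IsGreatest {l : ℝ | l ∈ Set.Icc (0 : ℝ) 1 ∧ minimaxReg v F l ≤ 0} lm ∧
      thetaRatStar v F = lm := by
  classical
  set M := v (Fin.last K) with hM_def
  have hvM : ∀ i, v i ≤ M := fun i => hv.monotone (Fin.le_last i)
  have hM0 : 0 ≤ M := hv0 _
  -- tail bounds
  have htail0 : ∀ f : Fin (K+1) → ℝ, (∀ i, 0 ≤ f i) → ∀ p, 0 ≤ tail v f p := by
    intro f hf p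
    apply Finset.sum_nonneg; intro i _
    split <;> simp [hf i]
  have htail1 : ∀ f, IsDist f → ∀ p, tail v f p ≤ 1 := by
    intro f hf p
    rw [show (1:ℝ) = ∑ i, f i from hf.2.symm]
    apply Finset.sum_le_sum; intro i _
    split <;> simp [hf.1 i]
  -- term bounds
  have hg0 : ∀ f, IsDist f → ∀ i, 0 ≤ v i * tail v f (v i) := fun f hf i =>
    mul_nonneg (hv0 i) (htail0 f hf.1 _)
  have hgM : ∀ f, IsDist f → ∀ i, v i * tail v f (v i) ≤ M := by
    intro f hf i
    calc v i * tail v f (v i) ≤ M * 1 :=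
          mul_le_mul (hvM i) (htail1 f hf _) (htail0 f hf.1 _) hM0
      _ = M := mul_one M
  have hbdd : ∀ f : Fin (K+1) → ℝ, BddAbove (Set.range fun i => v i * tail v f (v i)) :=
    fun f => (Set.finite_range _).bddAbove
  have hterm_le_opt : ∀ f (i : Fin (K+1)), v i * tail v f (v i) ≤ opt v f :=
    fun f i => le_ciSup (hbdd f) i
  have hopt0 : ∀ f, IsDist f → 0 ≤ opt v f := fun f hf =>
    le_trans (hg0 f hf 0) (hterm_le_opt f 0)
  have hoptM : ∀ f, IsDist f → opt v f ≤ M := fun f hf => ciSup_le (hgM f hf)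
  -- revenue bounds
  have hrev0 : ∀ φ f, (∀ i, 0 ≤ φ i) → IsDist f → 0 ≤ revenue v φ f := by
    intro φ f hφ hf
    apply Finset.sum_nonneg; intro i _
    exact mul_nonneg (mul_nonneg (hφ i) (hv0 i)) (htail0 f hf.1 _)
  have hrev_le_opt : ∀ φ f, IsDist φ → IsDist f → revenue v φ f ≤ opt v f := by
    intro φ f hφ hf
    calc revenue v φ f = ∑ i, φ i * (v i * tail v f (v i)) := by
          unfold revenue; congr 1; ext i; ring
      _ ≤ ∑ i, φ i * opt v f :=
          Finset.sum_le_sum fun i _ => mul_le_mul_of_nonneg_left (hterm_le_opt f i) (hφ.1 i)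
      _ = opt v f := by rw [← Finset.sum_mul, hφ.2, one_mul]
  have hrev_le_M : ∀ φ f, IsDist φ → IsDist f → revenue v φ f ≤ M := by
    intro φ f hφ hf
    calc revenue v φ f = ∑ i, φ i * (v i * tail v f (v i)) := by
          unfold revenue; congr 1; ext i; ring
      _ ≤ ∑ i, φ i * M :=
          Finset.sum_le_sum fun i _ => mul_le_mul_of_nonneg_left (hgM f hf i) (hφ.1 i)
      _ = M := by rw [← Finset.sum_mul, hφ.2, one_mul]
  -- ratio bounds
  have hrat0 : ∀ φ f, IsDist φ → f ∈ F → 0 ≤ ratio v φ f := fun φ f hφ hf =>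
    div_nonneg (hrev0 φ f hφ.1 (hsub f hf)) (hopt0 f (hsub f hf))
  have hrat1 : ∀ φ f, IsDist φ → f ∈ F → ratio v φ f ≤ 1 := fun φ f hφ hf =>
    (div_le_one (hopt f hf)).2 (hrev_le_opt φ f hφ (hsub f hf))
  -- Mech nonempty
  have hφ0 : (fun i : Fin (K+1) => if i = 0 then (1:ℝ) else 0) ∈ Mech K := by
    constructor
    · intro i; by_cases h : i = 0 <;> simp [h]
    · simp
  have hMne : (Mech K).Nonempty := ⟨_, hφ0⟩
  -- worstRatio bounds
  have hwr0 : ∀ φ, IsDist φ → 0 ≤ worstRatio v F φ := by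
    intro φ hφ
    apply le_csInf (hne.image _)
    rintro x ⟨f, hf, rfl⟩; exact hrat0 φ f hφ hf
  have hwrbl : ∀ φ, IsDist φ → BddBelow ((fun f => ratio v φ f) '' F) := by
    intro φ hφ
    exact ⟨0, by rintro x ⟨f, hf, rfl⟩; exact hrat0 φ f hφ hf⟩
  have hwr1 : ∀ φ, IsDist φ → worstRatio v F φ ≤ 1 := by
    intro φ hφ
    obtain ⟨f1, hf1⟩ := id hne
    exact le_trans (csInf_le (hwrbl φ hφ) ⟨f1, hf1, rfl⟩) (hrat1 φ f1 hφ hf1)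
  -- theta bounds
  set θ := thetaRatStar v F with hθ_def
  have hθba : BddAbove ((fun φ => worstRatio v F φ) '' Mech K) :=
    ⟨1, by rintro x ⟨φ, hφ, rfl⟩; exact hwr1 φ hφ⟩
  have hθ0 : 0 ≤ θ := le_trans (hwr0 _ hφ0) (le_csSup hθba ⟨_, hφ0, rfl⟩)
  have hθ1 : θ ≤ 1 := Real.sSup_le (by rintro x ⟨φ, hφ, rfl⟩; exact hwr1 φ hφ) zero_le_one
  have hwr_le_θ : ∀ φ, φ ∈ Mech K → worstRatio v F φ ≤ θ :=
    fun φ hφ => le_csSup hθba ⟨φ, hφ, rfl⟩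
  -- M > 0
  obtain ⟨f1, hf1⟩ := id hne
  have hMpos : 0 < M := lt_of_lt_of_le (hopt f1 hf1) (hoptM f1 (hsub f1 hf1))
  -- compactness: positive lower bound on opt over F
  have hcontopt : Continuous fun f : Fin (K+1) → ℝ => opt v f := by
    have h2 : (fun f : Fin (K+1) → ℝ => opt v f) = fun f =>
        Finset.univ.sup' ⟨(0 : Fin (K+1)), Finset.mem_univ _⟩
          (fun i => v i * tail v f (v i)) := by
      funext f
      apply le_antisymm
      · exact ciSup_le fun i =>
          Finset.le_sup' (fun i => v i * tail v f (v i)) (Finset.mem_univ i)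
      · exact Finset.sup'_le _ _ fun i _ => le_ciSup (hbdd f) i
    rw [h2]
    apply Continuous.finset_sup'_apply
    intro i _
    unfold tail
    exact continuous_const.mul (continuous_finset_sum _ fun j _ => by
      split_ifs
      exacts [continuous_apply j, continuous_const])
  have hFcomp : IsCompact F := by
    have hbox : IsCompact (Set.pi Set.univ fun _ : Fin (K+1) => Set.Icc (0:ℝ) 1) :=
      isCompact_univ_pi fun _ => isCompact_Icc
    apply hbox.of_isClosed_subset hcl
    intro f hf i _
    refine ⟨(hsub f hf).1 i, ?_⟩
    rw [show (1:ℝ) = ∑ j, f j from (hsub f hf).2.symm]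
    exact Finset.single_le_sum (fun j _ => (hsub f hf).1 j) (Finset.mem_univ i)
  obtain ⟨f0, hf0F, hf0min⟩ := hFcomp.exists_isMinOn ⟨f1, hf1⟩ hcontopt.continuousOn
  set c := opt v f0 with hc_def
  have hcpos : 0 < c := hopt f0 hf0F
  have hc_le : ∀ f ∈ F, c ≤ opt v f := fun f hf => hf0min hf
  -- bounds on (l*opt - rev) sets
  have hwcba : ∀ φ (l : ℝ), IsDist φ → l ≤ 1 →
      BddAbove ((fun f => l * opt v f - revenue v φ f) '' F) := by
    intro φ l hφ hl
    refine ⟨M, ?_⟩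
    rintro x ⟨f, hf, rfl⟩
    dsimp only
    have h1 : l * opt v f ≤ M := by
      rcases le_or_gt l 0 with h | h
      · exact le_trans (mul_nonpos_of_nonpos_of_nonneg h (hopt0 f (hsub f hf))) hM0
      · calc l * opt v f ≤ 1 * M :=
            mul_le_mul hl (hoptM f (hsub f hf)) (hopt0 f (hsub f hf)) zero_le_one
          _ = M := one_mul M
    have h2 : 0 ≤ revenue v φ f := hrev0 φ f hφ.1 (hsub f hf)
    linarith
  have hwc_ge : ∀ φ (l : ℝ), IsDist φ → 0 ≤ l → l ≤ 1 → -M ≤ wcReg v F φ l := by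
    intro φ l hφ hl0 hl1
    have h1 : l * opt v f1 - revenue v φ f1 ≤ wcReg v F φ l :=
      le_csSup (hwcba φ l hφ hl1) ⟨f1, hf1, rfl⟩
    have h2 : 0 ≤ l * opt v f1 := mul_nonneg hl0 (hopt0 f1 (hsub f1 hf1))
    have h3 : revenue v φ f1 ≤ M := hrev_le_M φ f1 hφ (hsub f1 hf1)
    linarith
  have hmmbb : ∀ l : ℝ, 0 ≤ l → l ≤ 1 →
      BddBelow ((fun φ => wcReg v F φ l) '' Mech K) := by
    intro l hl0 hl1
    exact ⟨-M, by rintro x ⟨φ, hφ, rfl⟩; exact hwc_ge φ l hφ hl0 hl1⟩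
  -- Claim 1 : minimaxReg θ ≤ 0
  have claim1 : minimaxReg v F θ ≤ 0 := by
    have key : ∀ ε : ℝ, 0 < ε → minimaxReg v F θ ≤ ε := by
      intro ε hε
      have hlt : θ - ε / M < θ := sub_lt_self _ (div_pos hε hMpos)
      obtain ⟨x, ⟨φ, hφ, rfl⟩, hx⟩ :=
        exists_lt_of_lt_csSup (hMne.image _) hlt
      have hub : ∀ f ∈ F, θ * opt v f - revenue v φ f ≤ ε := by
        intro f hf
        have h1 : θ - ε / M < ratio v φ f :=
          lt_of_lt_of_le hx (csInf_le (hwrbl φ hφ) ⟨f, hf, rfl⟩)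
        have h2 : (θ - ε / M) * opt v f ≤ revenue v φ f := by
          rw [← le_div_iff₀ (hopt f hf)]; exact h1.le
        have h3 : (ε / M) * opt v f ≤ (ε / M) * M :=
          mul_le_mul_of_nonneg_left (hoptM f (hsub f hf)) (by positivity)
        have h4 : (ε / M) * M = ε := div_mul_cancel₀ ε hMpos.ne'
        nlinarith
      have hwc : wcReg v F φ θ ≤ ε :=
        Real.sSup_le (by rintro x ⟨f, hf, rfl⟩; exact hub f hf) hε.le
      exact le_trans (csInf_le (hmmbb θ hθ0 hθ1) ⟨φ, hφ, rfl⟩) hwc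
    have := le_of_forall_pos_le_add (a := minimaxReg v F θ) (b := 0)
      (by intro ε hε; simpa using key ε hε)
    simpa using this
  -- Claim 2 : any l in the set is ≤ θ
  have claim2 : ∀ l : ℝ, l ∈ Set.Icc (0:ℝ) 1 → minimaxReg v F l ≤ 0 → l ≤ θ := by
    intro l hl hml
    apply le_of_forall_pos_le_add
    intro ε hε
    have hinf : minimaxReg v F l < ε * c := lt_of_le_of_lt hml (by positivity)
    obtain ⟨x, ⟨φ, hφ, rfl⟩, hx⟩ := exists_lt_of_csInf_lt (hMne.image _) hinf
    have hfr : ∀ f ∈ F, l - ε ≤ ratio v φ f := by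
      intro f hf
      have h1 : l * opt v f - revenue v φ f < ε * c :=
        lt_of_le_of_lt (le_csSup (hwcba φ l hφ hl.2) ⟨f, hf, rfl⟩) hx
      have h2 : c ≤ opt v f := hc_le f hf
      have h3 : (l - ε) * opt v f ≤ revenue v φ f := by nlinarith
      rw [ratio, le_div_iff₀ (hopt f hf)]
      exact h3
    have h4 : l - ε ≤ worstRatio v F φ :=
      le_csInf (hne.image _) (by rintro x ⟨f, hf, rfl⟩; exact hfr f hf)
    have h5 := hwr_le_θ φ hφ
    linarith
  exact ⟨θ, ⟨⟨⟨hθ0, hθ1⟩, claim1⟩, fun l hl => claim2 l hl.1 hl.2⟩, rfl⟩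


end RobustPricing
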